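/- Theorem 2 (Convergence of AIL): let π_{θ*} be a state-conditional policy and π̂ a belief-conditional policy such that ∑_{(s,b)∈S×B} d^{π̂}(s,b)·KL(π_{θ*}(·|s) ‖ π̂(·|b)) = 0 and J(π_{θ*}) ≥ J(κ) for every belief-conditional policy κ. Let (κ_k)_{k≥0} be any sequence of belief-conditional policies with κ_{k+1}(·|b) = π̂(·|b) for every b with d^{κ_k}(b) > 0, and let R = max_{x,a,x'} |r(x,a,x')|. Then for every k ≥ 0, |J(κ_k) − J(π̂)| ≤ 2R·γ^k/(1−γ); in particular J(κ_k) converges, as k → ∞, to the optimal partially observed return sup over belief-conditional policies κ of J(κ). -/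

import Mathlib

open scoped BigOperators ENNReal Classical

noncomputable section

/-- A probability mass function on a finite type. -/
def IsPmf {X : Type*} [Fintype X] (p : X → ℝ) : Prop :=
  (∀ x, 0 ≤ p x) ∧ ∑ x, p x = 1

/-- Kullback–Leibler divergence between two pmfs on a finite type, valued in `[0, ∞]`,
with the conventions `0 * log (0 / q a) = 0` and `KL(p‖q) = ∞` whenever
`p a > 0 = q a` for some `a`. -/
def klDiv {A : Type*} [Fintype A] (p q : A → ℝ) : ℝ≥0∞ :=
  if ∀ a, q a = 0 → p a = 0 then ENNReal.ofReal (∑ a, p a * Real.log (p a / q a)) else ⊤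

/-- Time-`t` marginal pmf of the Markov chain `(s_t, b_t)` induced by initial
distribution `μ₀`, transition kernel `T`, and a policy `pol` on state–belief pairs. -/
def traj {S B A : Type*} [Fintype S] [Fintype B] [Fintype A]
    (μ₀ : S × B → ℝ) (T : S × B → A → S × B → ℝ)
    (pol : S × B → A → ℝ) : ℕ → S × B → ℝ
  | 0 => μ₀
  | t + 1 => fun x' => ∑ x : S × B, ∑ a : A, traj μ₀ T pol t x * pol x a * T x a x'

/-- The pair policy induced by a belief-conditional policy. -/
def beliefPol {S B A : Type*} (κ : B → A → ℝ) : S × B → A → ℝ := fun x a => κ x.2 a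

/-- The pair policy induced by a state-conditional policy. -/
def statePol {S B A : Type*} (π : S → A → ℝ) : S × B → A → ℝ := fun x a => π x.1 a

/-- Discounted occupancy `d^pol(s,b) = (1-γ)·∑_t γ^t·q_pol(t)(s,b)`. -/
def occ {S B A : Type*} [Fintype S] [Fintype B] [Fintype A]
    (γ : ℝ) (μ₀ : S × B → ℝ) (T : S × B → A → S × B → ℝ)
    (pol : S × B → A → ℝ) (x : S × B) : ℝ :=
  (1 - γ) * ∑' t : ℕ, γ ^ t * traj μ₀ T pol t x

/-- Expected discounted return `J(pol) = ∑_t γ^t·E[r((s_t,b_t),a_t,(s_{t+1},b_{t+1}))]`. -/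
def ret {S B A : Type*} [Fintype S] [Fintype B] [Fintype A]
    (γ : ℝ) (μ₀ : S × B → ℝ) (T : S × B → A → S × B → ℝ)
    (pol : S × B → A → ℝ) (r : S × B → A → S × B → ℝ) : ℝ :=
  ∑' t : ℕ, γ ^ t * ∑ x : S × B, ∑ a : A, ∑ x' : S × B,
    traj μ₀ T pol t x * pol x a * T x a x' * r x a x'

namespace AILAux

/-- Gibbs: KL divergence zero implies equality of pmfs. -/
lemma pmf_eq_of_klDiv_eq_zero {A : Type*} [Fintype A] {p q : A → ℝ}
    (hp : IsPmf p) (hq : IsPmf q) (h : klDiv p q = 0) : p = q := by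
  unfold klDiv at h
  split_ifs at h with habs
  · rw [ENNReal.ofReal_eq_zero] at h
    have hpt : ∀ a : A, p a - q a ≤ p a * Real.log (p a / q a) := by
      intro a
      rcases eq_or_lt_of_le (hp.1 a) with h0 | h0
      · rw [← h0]; simpa using hq.1 a
      · have hq0 : 0 < q a := by
          rcases eq_or_lt_of_le (hq.1 a) with hz | hz
          · exact absurd (habs a hz.symm) h0.ne'
          · exact hz
        have hlog : Real.log (q a / p a) ≤ q a / p a - 1 :=
          Real.log_le_sub_one_of_pos (div_pos hq0 h0)
        have hrw : p a * Real.log (p a / q a) = -(p a * Real.log (q a / p a)) := by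
          rw [show p a / q a = (q a / p a)⁻¹ by field_simp, Real.log_inv]; ring
        have hd : p a * (q a / p a) = q a := by field_simp
        nlinarith [mul_le_mul_of_nonneg_left hlog h0.le]
    have hle : ∑ a, (p a - q a) ≤ ∑ a, p a * Real.log (p a / q a) :=
      Finset.sum_le_sum fun a _ => hpt a
    have hz : ∑ a, (p a - q a) = 0 := by
      rw [Finset.sum_sub_distrib, hp.2, hq.2]; ring
    have heq : ∀ a ∈ Finset.univ, p a - q a = p a * Real.log (p a / q a) :=
      (Finset.sum_eq_sum_iff_of_le fun a _ => hpt a).mp (le_antisymm hle (by rw [hz]; exact h))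
    funext a
    have ha := heq a (Finset.mem_univ a)
    rcases eq_or_lt_of_le (hp.1 a) with h0 | h0
    · rw [← h0] at ha ⊢
      simp only [zero_mul, zero_sub, neg_eq_zero] at ha
      exact ha.symm
    · have hq0 : 0 < q a := by
        rcases eq_or_lt_of_le (hq.1 a) with hz' | hz'
        · exact absurd (habs a hz'.symm) h0.ne'
        · exact hz'
      by_contra hne
      have hne' : q a / p a ≠ 1 := by
        intro h1
        rw [div_eq_one_iff_eq h0.ne'] at h1
        exact hne h1.symm
      have hlt : Real.log (q a / p a) < q a / p a - 1 :=
        Real.log_lt_sub_one_of_pos (div_pos hq0 h0) hne'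
      have hrw : p a * Real.log (p a / q a) = -(p a * Real.log (q a / p a)) := by
        rw [show p a / q a = (q a / p a)⁻¹ by field_simp, Real.log_inv]; ring
      have hd : p a * (q a / p a) = q a := by field_simp
      nlinarith [mul_lt_mul_of_pos_left hlt h0]
  · exact absurd h (by simp)

variable {S B A : Type*} [Fintype S] [Fintype B] [Fintype A]
variable {μ₀ : S × B → ℝ} {T : S × B → A → S × B → ℝ}

lemma traj_nonneg (hμ₀ : IsPmf μ₀) (hT : ∀ x a, IsPmf (T x a))
    {pol : S × B → A → ℝ} (hpol : ∀ x, IsPmf (pol x)) :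
    ∀ t x, 0 ≤ traj μ₀ T pol t x := by
  intro t
  induction t with
  | zero => exact hμ₀.1
  | succ t ih =>
    intro x'
    refine Finset.sum_nonneg fun x _ => Finset.sum_nonneg fun a _ => ?_
    exact mul_nonneg (mul_nonneg (ih x) ((hpol x).1 a)) ((hT x a).1 x')

lemma traj_sum (hμ₀ : IsPmf μ₀) (hT : ∀ x a, IsPmf (T x a))
    {pol : S × B → A → ℝ} (hpol : ∀ x, IsPmf (pol x)) :
    ∀ t, ∑ x, traj μ₀ T pol t x = 1 := by
  intro t
  induction t with
  | zero => exact hμ₀.2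
  | succ t ih =>
    show ∑ x' : S × B, ∑ x : S × B, ∑ a : A, traj μ₀ T pol t x * pol x a * T x a x' = 1
    rw [Finset.sum_comm]
    calc ∑ x : S × B, ∑ x' : S × B, ∑ a : A, traj μ₀ T pol t x * pol x a * T x a x'
        = ∑ x : S × B, ∑ a : A, ∑ x' : S × B, traj μ₀ T pol t x * pol x a * T x a x' := by
          exact Finset.sum_congr rfl fun x _ => Finset.sum_comm
      _ = ∑ x : S × B, ∑ a : A, traj μ₀ T pol t x * pol x a := by
          refine Finset.sum_congr rfl fun x _ => Finset.sum_congr rfl fun a _ => ?_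
          rw [← Finset.mul_sum, (hT x a).2, mul_one]
      _ = ∑ x : S × B, traj μ₀ T pol t x := by
          refine Finset.sum_congr rfl fun x _ => ?_
          rw [← Finset.mul_sum, (hpol x).2, mul_one]
      _ = 1 := ih

lemma mass_one (hμ₀ : IsPmf μ₀) (hT : ∀ x a, IsPmf (T x a))
    {pol : S × B → A → ℝ} (hpol : ∀ x, IsPmf (pol x)) (t : ℕ) :
    ∑ x : S × B, ∑ a : A, ∑ x' : S × B, traj μ₀ T pol t x * pol x a * T x a x' = 1 := by
  calc ∑ x : S × B, ∑ a : A, ∑ x' : S × B, traj μ₀ T pol t x * pol x a * T x a x'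
      = ∑ x : S × B, ∑ a : A, traj μ₀ T pol t x * pol x a := by
        refine Finset.sum_congr rfl fun x _ => Finset.sum_congr rfl fun a _ => ?_
        rw [← Finset.mul_sum, (hT x a).2, mul_one]
    _ = ∑ x : S × B, traj μ₀ T pol t x := by
        refine Finset.sum_congr rfl fun x _ => ?_
        rw [← Finset.mul_sum, (hpol x).2, mul_one]
    _ = 1 := traj_sum hμ₀ hT hpol t

lemma traj_le_one (hμ₀ : IsPmf μ₀) (hT : ∀ x a, IsPmf (T x a))
    {pol : S × B → A → ℝ} (hpol : ∀ x, IsPmf (pol x)) (t : ℕ) (x : S × B) :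
    traj μ₀ T pol t x ≤ 1 := by
  rw [← traj_sum hμ₀ hT hpol t]
  exact Finset.single_le_sum (fun y _ => traj_nonneg hμ₀ hT hpol t y) (Finset.mem_univ x)

lemma summable_traj {γ : ℝ} (hγ0 : 0 ≤ γ) (hγ1 : γ < 1)
    (hμ₀ : IsPmf μ₀) (hT : ∀ x a, IsPmf (T x a))
    {pol : S × B → A → ℝ} (hpol : ∀ x, IsPmf (pol x)) (x : S × B) :
    Summable (fun t : ℕ => γ ^ t * traj μ₀ T pol t x) := by
  refine Summable.of_nonneg_of_le (fun t => mul_nonneg (pow_nonneg hγ0 t)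
    (traj_nonneg hμ₀ hT hpol t x)) (fun t => ?_) (summable_geometric_of_lt_one hγ0 hγ1)
  calc γ ^ t * traj μ₀ T pol t x ≤ γ ^ t * 1 :=
        mul_le_mul_of_nonneg_left (traj_le_one hμ₀ hT hpol t x) (pow_nonneg hγ0 t)
    _ = γ ^ t := mul_one _

lemma occ_nonneg {γ : ℝ} (hγ0 : 0 ≤ γ) (hγ1 : γ < 1)
    (hμ₀ : IsPmf μ₀) (hT : ∀ x a, IsPmf (T x a))
    {pol : S × B → A → ℝ} (hpol : ∀ x, IsPmf (pol x)) (x : S × B) :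
    0 ≤ occ γ μ₀ T pol x :=
  mul_nonneg (by linarith) (tsum_nonneg fun t =>
    mul_nonneg (pow_nonneg hγ0 t) (traj_nonneg hμ₀ hT hpol t x))

lemma occ_pos_of_traj_pos {γ : ℝ} (hγ0 : 0 < γ) (hγ1 : γ < 1)
    (hμ₀ : IsPmf μ₀) (hT : ∀ x a, IsPmf (T x a))
    {pol : S × B → A → ℝ} (hpol : ∀ x, IsPmf (pol x)) {t : ℕ} {x : S × B}
    (h : 0 < traj μ₀ T pol t x) : 0 < occ γ μ₀ T pol x := by
  have hle : γ ^ t * traj μ₀ T pol t x ≤ ∑' u : ℕ, γ ^ u * traj μ₀ T pol u x :=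
    Summable.le_tsum (summable_traj hγ0.le hγ1 hμ₀ hT hpol x) t fun u _ =>
      mul_nonneg (pow_nonneg hγ0.le u) (traj_nonneg hμ₀ hT hpol u x)
  have : 0 < γ ^ t * traj μ₀ T pol t x := mul_pos (pow_pos hγ0 t) h
  exact mul_pos (by linarith) (lt_of_lt_of_le this hle)

/-- If two policies agree wherever the second's trajectory is positive (for all
times below `N`), the trajectories agree up to `N`. -/
lemma traj_eq_of_agree (hμ₀ : IsPmf μ₀) (hT : ∀ x a, IsPmf (T x a))
    {pol₁ pol₂ : S × B → A → ℝ} (hpol₂ : ∀ x, IsPmf (pol₂ x)) (N : ℕ)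
    (hag : ∀ t < N, ∀ x, 0 < traj μ₀ T pol₂ t x → pol₁ x = pol₂ x) :
    ∀ t ≤ N, traj μ₀ T pol₁ t = traj μ₀ T pol₂ t := by
  intro t
  induction t with
  | zero => intro _; rfl
  | succ t ih =>
    intro ht
    have ht' : t ≤ N := le_trans (Nat.le_succ t) ht
    funext x'
    show ∑ x : S × B, ∑ a : A, traj μ₀ T pol₁ t x * pol₁ x a * T x a x'
        = ∑ x : S × B, ∑ a : A, traj μ₀ T pol₂ t x * pol₂ x a * T x a x'
    refine Finset.sum_congr rfl fun x _ => ?_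
    rw [ih ht']
    rcases eq_or_lt_of_le (traj_nonneg hμ₀ hT hpol₂ t x) with h0 | h0
    · simp [← h0]
    · rw [hag t (lt_of_lt_of_le (Nat.lt_succ_self t) ht) x h0]

/-- Single-step expected reward. -/
def stepE (μ₀ : S × B → ℝ) (T : S × B → A → S × B → ℝ)
    (pol : S × B → A → ℝ) (r : S × B → A → S × B → ℝ) (t : ℕ) : ℝ :=
  ∑ x : S × B, ∑ a : A, ∑ x' : S × B, traj μ₀ T pol t x * pol x a * T x a x' * r x a x'

lemma ret_eq_tsum_stepE (γ : ℝ) (pol : S × B → A → ℝ) (r : S × B → A → S × B → ℝ) :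
    ret γ μ₀ T pol r = ∑' t : ℕ, γ ^ t * stepE μ₀ T pol r t := rfl

lemma stepE_abs_le (hμ₀ : IsPmf μ₀) (hT : ∀ x a, IsPmf (T x a))
    {pol : S × B → A → ℝ} (hpol : ∀ x, IsPmf (pol x))
    {r : S × B → A → S × B → ℝ} {R : ℝ} (hRb : ∀ x a x', |r x a x'| ≤ R) (t : ℕ) :
    |stepE μ₀ T pol r t| ≤ R := by
  have h1 : |stepE μ₀ T pol r t| ≤ ∑ x : S × B, ∑ a : A, ∑ x' : S × B,
      |traj μ₀ T pol t x * pol x a * T x a x' * r x a x'| := by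
    refine (Finset.abs_sum_le_sum_abs _ _).trans (Finset.sum_le_sum fun x _ => ?_)
    refine (Finset.abs_sum_le_sum_abs _ _).trans (Finset.sum_le_sum fun a _ => ?_)
    exact Finset.abs_sum_le_sum_abs _ _
  have h2 : ∑ x : S × B, ∑ a : A, ∑ x' : S × B,
      |traj μ₀ T pol t x * pol x a * T x a x' * r x a x'|
      ≤ ∑ x : S × B, ∑ a : A, ∑ x' : S × B,
      traj μ₀ T pol t x * pol x a * T x a x' * R := by
    refine Finset.sum_le_sum fun x _ => Finset.sum_le_sum fun a _ =>
      Finset.sum_le_sum fun x' _ => ?_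
    have hw : 0 ≤ traj μ₀ T pol t x * pol x a * T x a x' :=
      mul_nonneg (mul_nonneg (traj_nonneg hμ₀ hT hpol t x) ((hpol x).1 a)) ((hT x a).1 x')
    rw [abs_mul, abs_of_nonneg hw]
    exact mul_le_mul_of_nonneg_left (hRb x a x') hw
  have h3 : ∑ x : S × B, ∑ a : A, ∑ x' : S × B,
      traj μ₀ T pol t x * pol x a * T x a x' * R = R := by
    simp only [← Finset.sum_mul]
    rw [mass_one hμ₀ hT hpol t, one_mul]
  linarith

lemma summable_ret {γ : ℝ} (hγ0 : 0 ≤ γ) (hγ1 : γ < 1)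
    (hμ₀ : IsPmf μ₀) (hT : ∀ x a, IsPmf (T x a))
    {pol : S × B → A → ℝ} (hpol : ∀ x, IsPmf (pol x))
    {r : S × B → A → S × B → ℝ} {R : ℝ} (hRb : ∀ x a x', |r x a x'| ≤ R) :
    Summable (fun t : ℕ => γ ^ t * stepE μ₀ T pol r t) := by
  refine Summable.of_norm_bounded
    ((summable_geometric_of_lt_one hγ0 hγ1).mul_left R) (fun t => ?_)
  rw [Real.norm_eq_abs, abs_mul, abs_of_nonneg (pow_nonneg hγ0 t), mul_comm]
  exact mul_le_mul_of_nonneg_right (stepE_abs_le hμ₀ hT hpol hRb t) (pow_nonneg hγ0 t)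

lemma stepE_congr (hμ₀ : IsPmf μ₀) (hT : ∀ x a, IsPmf (T x a))
    {pol₁ pol₂ : S × B → A → ℝ} (hpol₂ : ∀ x, IsPmf (pol₂ x))
    (r : S × B → A → S × B → ℝ) (t : ℕ)
    (htr : traj μ₀ T pol₁ t = traj μ₀ T pol₂ t)
    (hag : ∀ x, 0 < traj μ₀ T pol₂ t x → pol₁ x = pol₂ x) :
    stepE μ₀ T pol₁ r t = stepE μ₀ T pol₂ r t := by
  unfold stepE
  rw [htr]
  refine Finset.sum_congr rfl fun x _ => ?_
  rcases eq_or_lt_of_le (traj_nonneg hμ₀ hT hpol₂ t x) with h0 | h0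
  · simp [← h0]
  · rw [hag x h0]

lemma ret_diff_bound {γ R : ℝ} (hγ0 : 0 < γ) (hγ1 : γ < 1)
    (hμ₀ : IsPmf μ₀) (hT : ∀ x a, IsPmf (T x a))
    {pol₁ pol₂ : S × B → A → ℝ} (hpol₁ : ∀ x, IsPmf (pol₁ x)) (hpol₂ : ∀ x, IsPmf (pol₂ x))
    {r : S × B → A → S × B → ℝ} (hRb : ∀ x a x', |r x a x'| ≤ R) (k : ℕ)
    (hag : ∀ t < k, ∀ x, 0 < traj μ₀ T pol₂ t x → pol₁ x = pol₂ x) :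
    |ret γ μ₀ T pol₁ r - ret γ μ₀ T pol₂ r| ≤ 2 * R * γ ^ k / (1 - γ) := by
  have hE1 := summable_ret hγ0.le hγ1 hμ₀ hT hpol₁ hRb
  have hE2 := summable_ret hγ0.le hγ1 hμ₀ hT hpol₂ hRb
  set f : ℕ → ℝ := fun t => γ ^ t * stepE μ₀ T pol₁ r t - γ ^ t * stepE μ₀ T pol₂ r t with hfdef
  have hf : Summable f := hE1.sub hE2
  have hret : ret γ μ₀ T pol₁ r - ret γ μ₀ T pol₂ r = ∑' t, f t := (Summable.tsum_sub hE1 hE2).symm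
  have htr := traj_eq_of_agree hμ₀ hT hpol₂ k hag
  have hzero : ∀ t < k, f t = 0 := by
    intro t ht
    have hst := stepE_congr hμ₀ hT hpol₂ r t (htr t ht.le) (hag t ht)
    simp [hfdef, hst]
  have htail : ∑' t, f t = ∑' t, f (t + k) := by
    have h1 := Summable.sum_add_tsum_nat_add k hf
    have h2 : ∑ i ∈ Finset.range k, f i = 0 :=
      Finset.sum_eq_zero fun i hi => hzero i (Finset.mem_range.mp hi)
    linarith
  have hb : ∀ t : ℕ, ‖f (t + k)‖ ≤ 2 * R * γ ^ k * γ ^ t := by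
    intro t
    have e1 := stepE_abs_le hμ₀ hT hpol₁ hRb (t + k)
    have e2 := stepE_abs_le hμ₀ hT hpol₂ hRb (t + k)
    have hpow : (0:ℝ) ≤ γ ^ (t + k) := pow_nonneg hγ0.le _
    have hfe : ‖f (t + k)‖ = γ ^ (t + k) *
        |stepE μ₀ T pol₁ r (t + k) - stepE μ₀ T pol₂ r (t + k)| := by
      rw [hfdef]
      simp only [Real.norm_eq_abs, ← mul_sub, abs_mul, abs_of_nonneg hpow]
    have habs : |stepE μ₀ T pol₁ r (t + k) - stepE μ₀ T pol₂ r (t + k)|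
        ≤ 2 * R := by
      have := norm_sub_le (stepE μ₀ T pol₁ r (t + k)) (stepE μ₀ T pol₂ r (t + k))
      simp only [Real.norm_eq_abs] at this
      linarith
    rw [hfe, pow_add]
    calc γ ^ t * γ ^ k * |stepE μ₀ T pol₁ r (t + k) - stepE μ₀ T pol₂ r (t + k)|
        ≤ γ ^ t * γ ^ k * (2 * R) := by
          exact mul_le_mul_of_nonneg_left habs
            (mul_nonneg (pow_nonneg hγ0.le t) (pow_nonneg hγ0.le k))
      _ = 2 * R * γ ^ k * γ ^ t := by ring
  have hgeo : Summable (fun t : ℕ => 2 * R * γ ^ k * γ ^ t) :=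
    (summable_geometric_of_lt_one hγ0.le hγ1).mul_left _
  have hsumnorm : Summable (fun t : ℕ => ‖f (t + k)‖) :=
    Summable.of_nonneg_of_le (fun t => norm_nonneg _) hb hgeo
  have h4 : ‖∑' t, f (t + k)‖ ≤ ∑' t, ‖f (t + k)‖ := norm_tsum_le_tsum_norm hsumnorm
  have h5 : ∑' t, ‖f (t + k)‖ ≤ ∑' t : ℕ, 2 * R * γ ^ k * γ ^ t :=
    Summable.tsum_le_tsum hb hsumnorm hgeo
  have h6 : ∑' t : ℕ, 2 * R * γ ^ k * γ ^ t = 2 * R * γ ^ k / (1 - γ) := by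
    rw [tsum_mul_left, tsum_geometric_of_lt_one hγ0.le hγ1, div_eq_mul_inv]
  rw [hret, htail, ← Real.norm_eq_abs]
  linarith

end AILAux

/-- Theorem 2 (Convergence of AIL): under identifiability of `{π_{θ*}, π̂}` and
optimality of `π_{θ*}`, the returns of the AIL iterates `κ_k` satisfy
`|J(κ_k) − J(π̂)| ≤ 2·R·γ^k/(1−γ)` and converge to the optimal partially observed
return `⨆_κ J(κ)`. -/
theorem convergence_of_ail
    {S B A : Type*} [Fintype S] [Fintype B] [Fintype A]
    [Nonempty S] [Nonempty B] [Nonempty A]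
    (μ₀ : S × B → ℝ) (hμ₀ : IsPmf μ₀)
    (T : S × B → A → S × B → ℝ) (hT : ∀ x a, IsPmf (T x a))
    (γ : ℝ) (hγ0 : 0 < γ) (hγ1 : γ < 1)
    (r : S × B → A → S × B → ℝ)
    (πθ : S → A → ℝ) (hπθ : ∀ s, IsPmf (πθ s))
    (πhat : B → A → ℝ) (hπhat : ∀ b, IsPmf (πhat b))
    (hid : ∑ x : S × B,
        ENNReal.ofReal (occ γ μ₀ T (beliefPol πhat) x) * klDiv (πθ x.1) (πhat x.2) = 0)
    (hopt : ∀ κ : B → A → ℝ, (∀ b, IsPmf (κ b)) →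
        ret γ μ₀ T (beliefPol κ) r ≤ ret γ μ₀ T (statePol πθ) r)
    (κ : ℕ → B → A → ℝ) (hκ : ∀ k b, IsPmf (κ k b))
    (hiter : ∀ k : ℕ, ∀ b : B,
      0 < ∑ s : S, occ γ μ₀ T (beliefPol (κ k)) (s, b) → κ (k + 1) b = πhat b)
    (R : ℝ) (hR : R = ⨆ x : S × B, ⨆ a : A, ⨆ x' : S × B, |r x a x'|) :
    (∀ k : ℕ,
      |ret γ μ₀ T (beliefPol (κ k)) r - ret γ μ₀ T (beliefPol πhat) r|
        ≤ 2 * R * γ ^ k / (1 - γ)) ∧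
    Filter.Tendsto (fun k => ret γ μ₀ T (beliefPol (κ k)) r) Filter.atTop
      (nhds (⨆ κ' : {κ' : B → A → ℝ // ∀ b, IsPmf (κ' b)},
        ret γ μ₀ T (beliefPol κ'.1) r)) := by
  classical
  open AILAux in
  -- bound on the reward
  have hRb : ∀ x a x', |r x a x'| ≤ R := by
    intro x a x'
    rw [hR]
    have b3 : |r x a x'| ≤ ⨆ x' : S × B, |r x a x'| :=
      le_ciSup (f := fun x' : S × B => |r x a x'|)
        (Set.Finite.bddAbove (Set.finite_range _)) x'
    have b2 : (⨆ x' : S × B, |r x a x'|) ≤ ⨆ a : A, ⨆ x' : S × B, |r x a x'| :=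
      le_ciSup (f := fun a : A => ⨆ x' : S × B, |r x a x'|)
        (Set.Finite.bddAbove (Set.finite_range _)) a
    have b1 : (⨆ a : A, ⨆ x' : S × B, |r x a x'|)
        ≤ ⨆ x : S × B, ⨆ a : A, ⨆ x' : S × B, |r x a x'| :=
      le_ciSup (f := fun x : S × B => ⨆ a : A, ⨆ x' : S × B, |r x a x'|)
        (Set.Finite.bddAbove (Set.finite_range _)) x
    linarith
  have hbh : ∀ x : S × B, IsPmf ((beliefPol πhat : S × B → A → ℝ) x) := fun x => hπhat x.2
  have hbp : ∀ k : ℕ, ∀ x : S × B, IsPmf ((beliefPol (κ k) : S × B → A → ℝ) x) :=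
    fun k x => hκ k x.2
  have hsp : ∀ x : S × B, IsPmf ((statePol πθ : S × B → A → ℝ) x) := fun x => hπθ x.1
  -- policy agreement property for the iterates
  have P : ∀ k : ℕ, ∀ t < k, ∀ x : S × B,
      0 < traj μ₀ T (beliefPol πhat) t x → beliefPol (κ k) x = beliefPol πhat x := by
    intro k
    induction k with
    | zero => intro t ht; exact absurd ht (Nat.not_lt_zero t)
    | succ k ih =>
      intro t ht x hx
      have ht' : t ≤ k := Nat.lt_succ_iff.mp ht
      have htr := traj_eq_of_agree hμ₀ hT hbh k ih t ht'
      have hx' : 0 < traj μ₀ T (beliefPol (κ k)) t x := by rw [htr]; exact hx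
      have hoc : 0 < occ γ μ₀ T (beliefPol (κ k)) x :=
        occ_pos_of_traj_pos hγ0 hγ1 hμ₀ hT (hbp k) hx'
      have hsum : 0 < ∑ s : S, occ γ μ₀ T (beliefPol (κ k)) (s, x.2) := by
        refine Finset.sum_pos' (fun s _ => occ_nonneg hγ0.le hγ1 hμ₀ hT (hbp k) _)
          ⟨x.1, Finset.mem_univ _, ?_⟩
        rw [Prod.mk.eta]; exact hoc
      have hkb := hiter k x.2 hsum
      funext a
      simp only [beliefPol, hkb]
  have part1 : ∀ k : ℕ,
      |ret γ μ₀ T (beliefPol (κ k)) r - ret γ μ₀ T (beliefPol πhat) r|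
        ≤ 2 * R * γ ^ k / (1 - γ) :=
    fun k => ret_diff_bound hγ0 hγ1 hμ₀ hT (hbp k) hbh hRb k (P k)
  -- the expert state policy matches the belief policy on the support
  have hagθ : ∀ t : ℕ, ∀ x : S × B, 0 < traj μ₀ T (beliefPol πhat) t x →
      (statePol πθ : S × B → A → ℝ) x = beliefPol πhat x := by
    intro t x hx
    have hoc : 0 < occ γ μ₀ T (beliefPol πhat) x :=
      occ_pos_of_traj_pos hγ0 hγ1 hμ₀ hT hbh hx
    have hterm := (Finset.sum_eq_zero_iff.mp hid) x (Finset.mem_univ x)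
    have hkl : klDiv (πθ x.1) (πhat x.2) = 0 := by
      rcases mul_eq_zero.mp hterm with h | h
      · exfalso; rw [ENNReal.ofReal_eq_zero] at h; linarith
      · exact h
    have hpq := pmf_eq_of_klDiv_eq_zero (hπθ x.1) (hπhat x.2) hkl
    funext a
    show πθ x.1 a = πhat x.2 a
    rw [hpq]
  have hstate : ret γ μ₀ T (statePol πθ) r = ret γ μ₀ T (beliefPol πhat) r := by
    rw [ret_eq_tsum_stepE, ret_eq_tsum_stepE]
    refine tsum_congr fun t => ?_
    congr 1
    refine stepE_congr hμ₀ hT hbh r t ?_ (hagθ t)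
    exact traj_eq_of_agree hμ₀ hT hbh t (fun t' _ => hagθ t') t le_rfl
  set L : ℝ := ret γ μ₀ T (beliefPol πhat) r with hL
  haveI : Nonempty {κ' : B → A → ℝ // ∀ b, IsPmf (κ' b)} := ⟨⟨πhat, hπhat⟩⟩
  have hsup : (⨆ κ' : {κ' : B → A → ℝ // ∀ b, IsPmf (κ' b)},
      ret γ μ₀ T (beliefPol κ'.1) r) = L := by
    apply le_antisymm
    · exact ciSup_le fun κ' => le_of_le_of_eq (hopt κ'.1 κ'.2) hstate
    · refine le_ciSup (f := fun κ' : {κ' : B → A → ℝ // ∀ b, IsPmf (κ' b)} =>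
        ret γ μ₀ T (beliefPol κ'.1) r) ?_ ⟨πhat, hπhat⟩
      refine ⟨L, ?_⟩
      rintro y ⟨κ', rfl⟩
      exact le_of_le_of_eq (hopt κ'.1 κ'.2) hstate
  refine ⟨part1, ?_⟩
  rw [hsup]
  have hg : Filter.Tendsto (fun k : ℕ => 2 * R * γ ^ k / (1 - γ)) Filter.atTop (nhds 0) := by
    have heq : (fun k : ℕ => 2 * R * γ ^ k / (1 - γ))
        = fun k : ℕ => (2 * R / (1 - γ)) * γ ^ k := by funext k; ring
    rw [heq]
    have h := tendsto_pow_atTop_nhds_zero_of_lt_one hγ0.le hγ1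
    simpa using h.const_mul (2 * R / (1 - γ))
  have hdz : Filter.Tendsto (fun k : ℕ => ret γ μ₀ T (beliefPol (κ k)) r - L)
      Filter.atTop (nhds 0) :=
    squeeze_zero_norm (fun k => by simpa [Real.norm_eq_abs] using part1 k) hg
  have hfin := hdz.add_const L
  simpa using hfin
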